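/- A polynomial p ∈ ℝ[x] satisfies p(x) ≥ 0 for all x ≥ 0 if and only if there exist polynomials f₁, f₂, g₁, g₂ ∈ ℝ[x] with p(x) = f₁(x)² + f₂(x)² + x·(g₁(x)² + g₂(x)²). (Pólya–Szegő characterization of 𝒫₁.) -/

import Mathlib

open Polynomial

private def PS (p : Polynomial ℝ) : Prop :=
  ∃ f₁ f₂ g₁ g₂ : Polynomial ℝ, p = f₁ ^ 2 + f₂ ^ 2 + X * (g₁ ^ 2 + g₂ ^ 2)

private lemma PS.mul {p q : Polynomial ℝ} (hp : PS p) (hq : PS q) : PS (p * q) := by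
  obtain ⟨a, b, c, d, rfl⟩ := hp
  obtain ⟨e, f, g, h, rfl⟩ := hq
  exact ⟨a*e - b*f - X*(c*g + d*h), a*f + b*e - X*(d*g - c*h),
    a*g - b*h + c*e + d*f, a*h + b*g + d*e - c*f, by ring⟩

/-- If a real polynomial is nonnegative on `[0,∞)` except possibly at one point,
it is nonnegative on all of `[0,∞)`. -/
private lemma nonneg_extend (q : Polynomial ℝ) (r : ℝ)
    (h : ∀ x : ℝ, 0 ≤ x → x ≠ r → 0 ≤ q.eval x) :
    ∀ x : ℝ, 0 ≤ x → 0 ≤ q.eval x := by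
  intro x hx
  rcases eq_or_ne x r with rfl | hne
  · -- limit along 𝓝[>] x
    have ht : Filter.Tendsto (fun y => q.eval y) (nhdsWithin x (Set.Ioi x)) (nhds (q.eval x)) :=
      (q.continuous.continuousAt).mono_left nhdsWithin_le_nhds
    refine ge_of_tendsto ht ?_
    filter_upwards [self_mem_nhdsWithin] with y hy
    exact h y (le_of_lt (lt_of_le_of_lt hx hy)) (ne_of_gt hy)
  · exact h x hx hne

private lemma key : ∀ n : ℕ, ∀ p : Polynomial ℝ, p.natDegree ≤ n →
    (∀ x : ℝ, 0 ≤ x → 0 ≤ p.eval x) → PS p := by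
  intro n
  induction n with
  | zero =>
    intro p hdeg hpos
    have hc : p = C (p.coeff 0) := eq_C_of_natDegree_le_zero hdeg
    have h0 : 0 ≤ p.coeff 0 := by
      have := hpos 0 le_rfl
      rwa [← coeff_zero_eq_eval_zero] at this
    refine ⟨C (Real.sqrt (p.coeff 0)), 0, 0, 0, ?_⟩
    conv_lhs => rw [hc]
    rw [← C_pow, Real.sq_sqrt h0]; ring
  | succ n ih =>
    intro p hdeg hpos
    rcases le_or_gt p.natDegree n with hle | hlt
    · exact ih p hle hpos
    have hdeg' : p.natDegree = n + 1 := le_antisymm hdeg hlt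
    have hp0 : p ≠ 0 := fun h => by simp [h] at hdeg'
    have hdegpos : 0 < p.degree := natDegree_pos_iff_degree_pos.mp (by omega)
    obtain ⟨z, hz⟩ : ∃ z : ℂ, aeval z p = 0 :=
      IsAlgClosed.exists_aeval_eq_zero ℂ p hdegpos.ne'
    rcases eq_or_ne z.im 0 with him | him
    · -- real root r = z.re
      set r := z.re with hr
      have hroot : p.eval r = 0 := by
        have hzr : z = (r : ℂ) := Complex.ext rfl (by simp [him])
        have : aeval (algebraMap ℝ ℂ r) p = algebraMap ℝ ℂ (p.eval r) := by
          rw [aeval_algebraMap_apply]; simp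
        rw [hzr] at hz
        have : (algebraMap ℝ ℂ) (p.eval r) = 0 := by
          rw [← this]; exact hz
        exact (map_eq_zero_iff _ (algebraMap ℝ ℂ).injective).mp this
      rcases le_or_gt r 0 with hrle | hrpos
      · -- r ≤ 0 : factor (X - C r)
        obtain ⟨h, hph⟩ : (X - C r) ∣ p := dvd_iff_isRoot.mpr hroot
        have hh0 : h ≠ 0 := by rintro rfl; rw [mul_zero] at hph; exact hp0 hph
        have hdh : h.natDegree ≤ n := by
          have := natDegree_mul (X_sub_C_ne_zero r) hh0
          rw [← hph, natDegree_X_sub_C] at this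
          omega
        have hhpos : ∀ x : ℝ, 0 ≤ x → 0 ≤ h.eval x := by
          apply nonneg_extend h r
          intro x hx hne
          have hxr : 0 < x - r := by
            rcases hrle.lt_or_eq with h' | h'
            · linarith
            · rw [h'] at hne ⊢
              rw [sub_zero]
              exact lt_of_le_of_ne hx (Ne.symm hne)
          have hpx := hpos x hx
          rw [hph, eval_mul, eval_sub, eval_X, eval_C] at hpx
          nlinarith
        have hPSd : PS (X - C r) :=
          ⟨C (Real.sqrt (-r)), 0, 1, 0, by
            rw [← C_pow, Real.sq_sqrt (by linarith)]; ring_nf; rw [map_neg]; ring⟩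
        rw [hph]; exact hPSd.mul (ih h hdh hhpos)
      · -- r > 0 : double root
        have hmin : IsLocalMin (fun x => p.eval x) r := by
          filter_upwards [eventually_gt_nhds hrpos] with y hy
          rw [hroot]; exact hpos y hy.le
        have hderiv : p.derivative.eval r = 0 := by
          have := hmin.deriv_eq_zero
          rwa [Polynomial.deriv] at this
        obtain ⟨h₁, hph₁⟩ : (X - C r) ∣ p := dvd_iff_isRoot.mpr hroot
        have hh₁r : h₁.eval r = 0 := by
          have : p.derivative = h₁ + (X - C r) * h₁.derivative := by
            rw [hph₁]; rw [derivative_mul, derivative_sub, derivative_X, derivative_C]; ring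
          have := congrArg (fun q => Polynomial.eval r q) this
          simp only [hderiv, eval_add, eval_mul, eval_sub, eval_X, eval_C, sub_self,
            zero_mul, add_zero] at this
          linarith
        obtain ⟨h, hh₁h⟩ : (X - C r) ∣ h₁ := dvd_iff_isRoot.mpr hh₁r
        have hph : p = (X - C r) ^ 2 * h := by rw [hph₁, hh₁h]; ring
        have hh0 : h ≠ 0 := by rintro rfl; rw [mul_zero] at hph; exact hp0 hph
        have hd2 : ((X - C r) ^ 2 : Polynomial ℝ).natDegree = 2 := by
          rw [natDegree_pow, natDegree_X_sub_C]
        have hdh : h.natDegree ≤ n := by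
          have := natDegree_mul (pow_ne_zero 2 (X_sub_C_ne_zero r)) hh0
          rw [← hph, hd2] at this
          omega
        have hhpos : ∀ x : ℝ, 0 ≤ x → 0 ≤ h.eval x := by
          apply nonneg_extend h r
          intro x hx hne
          have hxr : (x - r) ^ 2 > 0 := lt_of_le_of_ne (sq_nonneg _) (Ne.symm (pow_ne_zero 2 (sub_ne_zero.mpr hne)))
          have hpx := hpos x hx
          rw [hph, eval_mul, eval_pow, eval_sub, eval_X, eval_C] at hpx
          nlinarith
        have hPSd : PS ((X - C r) ^ 2) := ⟨X - C r, 0, 0, 0, by ring⟩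
        rw [hph]; exact hPSd.mul (ih h hdh hhpos)
    · -- non-real root : quadratic factor
      set q : Polynomial ℝ := X ^ 2 - C (2 * z.re) * X + C (‖z‖ ^ 2) with hq
      obtain ⟨h, hph⟩ : q ∣ p := p.quadratic_dvd_of_aeval_eq_zero_im_ne_zero hz him
      have hnorm : ‖z‖ ^ 2 = z.re ^ 2 + z.im ^ 2 := by
        rw [Complex.sq_norm, Complex.normSq_apply]; ring
      have hqeval : ∀ x : ℝ, q.eval x = (x - z.re) ^ 2 + z.im ^ 2 := by
        intro x
        simp only [hq, eval_add, eval_sub, eval_mul, eval_pow, eval_X, eval_C, hnorm]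
        ring
      have hqpos : ∀ x : ℝ, 0 < q.eval x := by
        intro x; rw [hqeval]
        have : z.im ^ 2 > 0 := lt_of_le_of_ne (sq_nonneg _) (Ne.symm (pow_ne_zero 2 him))
        nlinarith [sq_nonneg (x - z.re)]
      have hq0 : q ≠ 0 := fun h' => by
        have := hqpos 0; rw [h'] at this; simp at this
      have hdq : q.natDegree = 2 := by
        rw [hq]; compute_degree!
      have hh0 : h ≠ 0 := by rintro rfl; rw [mul_zero] at hph; exact hp0 hph
      have hdh : h.natDegree ≤ n := by
        have := natDegree_mul hq0 hh0
        rw [← hph, hdq] at this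
        omega
      have hhpos : ∀ x : ℝ, 0 ≤ x → 0 ≤ h.eval x := by
        intro x hx
        have hpx := hpos x hx
        rw [hph, eval_mul] at hpx
        nlinarith [hqpos x]
      have hPSq : PS q :=
        ⟨X - C z.re, C z.im, 0, 0, by
          rw [hq]
          have : C (‖z‖ ^ 2) = C z.re ^ 2 + C z.im ^ 2 := by
            rw [hnorm, map_add, ← C_pow, ← C_pow]
          have h2 : (C (2 * z.re) : Polynomial ℝ) = 2 * C z.re := by
            rw [C_mul, map_ofNat]
          rw [this, h2]; ring⟩
      rw [hph]; exact hPSq.mul (ih h hdh hhpos)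

theorem polya_szego (p : Polynomial ℝ) :
    (∀ x : ℝ, 0 ≤ x → 0 ≤ p.eval x) ↔
      ∃ f₁ f₂ g₁ g₂ : Polynomial ℝ,
        p = f₁ ^ 2 + f₂ ^ 2 + X * (g₁ ^ 2 + g₂ ^ 2) := by
  constructor
  · intro hpos
    exact key p.natDegree p le_rfl hpos
  · rintro ⟨f₁, f₂, g₁, g₂, rfl⟩ x hx
    simp only [eval_add, eval_mul, eval_pow, eval_X]
    positivity
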